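/- Let a ∈ ℝ^K be a vector with strictly positive entries and A a K×K diagonal positive semidefinite matrix of rank r. Then the matrix aa' + A has rank equal to min(K, r+1). -/

import Mathlib

open Matrix

/-- For `a ∈ ℝ^K` with strictly positive entries and `A` a diagonal PSD matrix
with exactly `r` nonzero diagonal entries, the matrix `a aᵀ + A` has rank `min K (r+1)`. -/
theorem rank_vecMulVec_add_diagonal {K : ℕ} (a : Fin K → ℝ) (ha : ∀ k, 0 < a k)
    (d : Fin K → ℝ) (hd : ∀ k, 0 ≤ d k) (r : ℕ)
    (hr : (Finset.univ.filter fun k => d k ≠ 0).card = r) :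
    (Matrix.vecMulVec a a + Matrix.diagonal d).rank = min K (r + 1) := by
  classical
  set M := Matrix.vecMulVec a a + Matrix.diagonal d with hM
  set S : Finset (Fin K) := Finset.univ.filter fun k => d k ≠ 0 with hS
  -- mulVec formula
  have hmul : ∀ (x : Fin K → ℝ) i, M.mulVec x i = a i * (a ⬝ᵥ x) + d i * x i := by
    intro x i
    rw [hM, Matrix.add_mulVec, Pi.add_apply, Matrix.mulVec_diagonal]
    congr 1
    simp [Matrix.mulVec, Matrix.vecMulVec, dotProduct, Finset.mul_sum, mul_assoc]
  -- kernel characterization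
  have hker : ∀ x : Fin K → ℝ, M.mulVec x = 0 ↔ (a ⬝ᵥ x = 0 ∧ ∀ k, d k * x k = 0) := by
    intro x
    constructor
    · intro h
      have hq : ∑ i, x i * (a i * (a ⬝ᵥ x) + d i * x i) = 0 := by
        have h0 : x ⬝ᵥ M.mulVec x = 0 := by rw [h]; simp
        simpa [dotProduct, hmul] using h0
      have hq' : (a ⬝ᵥ x) ^ 2 + ∑ i, d i * x i ^ 2 = 0 := by
        have e1 : ∀ i ∈ Finset.univ, x i * (a i * (a ⬝ᵥ x) + d i * x i)
            = x i * a i * (a ⬝ᵥ x) + d i * x i ^ 2 := fun i _ => by ring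
        rw [Finset.sum_congr rfl e1, Finset.sum_add_distrib, ← Finset.sum_mul] at hq
        have e2 : ∑ i, x i * a i = a ⬝ᵥ x := by
          simp [dotProduct, mul_comm]
        rw [e2, ← sq] at hq
        exact hq
      have h1 : 0 ≤ (a ⬝ᵥ x) ^ 2 := sq_nonneg _
      have h2 : ∀ i ∈ Finset.univ, 0 ≤ d i * x i ^ 2 := fun i _ =>
        mul_nonneg (hd i) (sq_nonneg _)
      have h2' : 0 ≤ ∑ i, d i * x i ^ 2 := Finset.sum_nonneg h2
      have hA : (a ⬝ᵥ x) ^ 2 = 0 := le_antisymm (by linarith) h1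
      have hB : ∑ i, d i * x i ^ 2 = 0 := le_antisymm (by linarith) h2'
      refine ⟨pow_eq_zero_iff (by norm_num) |>.mp hA, ?_⟩
      intro k
      have := (Finset.sum_eq_zero_iff_of_nonneg h2).mp hB k (Finset.mem_univ k)
      rcases mul_eq_zero.mp this with h | h
      · rw [h, zero_mul]
      · rw [pow_eq_zero_iff (by norm_num) |>.mp h, mul_zero]
    · rintro ⟨h1, h2⟩
      funext i
      rw [hmul, h1, mul_zero, zero_add, h2 i]
      rfl
  -- r ≤ K
  have hrK : r ≤ K := by
    rw [← hr]
    exact (Finset.card_filter_le _ _).trans (by simp)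
  rcases eq_or_lt_of_le hrK with hrK' | hrK'
  · -- r = K : full rank, kernel trivial
    have hSu : S = Finset.univ := by
      apply Finset.eq_univ_of_card
      rw [hr, hrK', Fintype.card_fin]
    have hker0 : LinearMap.ker M.mulVecLin = ⊥ := by
      rw [LinearMap.ker_eq_bot']
      intro x hx
      rw [Matrix.mulVecLin_apply] at hx
      obtain ⟨-, h2⟩ := (hker x).mp hx
      funext k
      have hkS : k ∈ S := by rw [hSu]; exact Finset.mem_univ k
      have hk : d k ≠ 0 := (Finset.mem_filter.mp hkS).2
      rcases mul_eq_zero.mp (h2 k) with h | h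
      · exact absurd h hk
      · exact h
    have : M.rank = K := by
      have h := LinearMap.finrank_range_add_finrank_ker M.mulVecLin
      rw [hker0, finrank_bot, add_zero] at h
      rw [Matrix.rank, h]
      simp [Module.finrank_pi]
    rw [this, ← hrK']
    omega
  · -- r < K
    obtain ⟨k₀, hk₀⟩ : ∃ k₀, k₀ ∉ S := by
      by_contra hcon
      push_neg at hcon
      have : S = Finset.univ := Finset.eq_univ_iff_forall.mpr hcon
      rw [this] at hr
      simp [Fintype.card_fin] at hr
      omega
    -- the comparison linear map
    let L : (Fin K → ℝ) →ₗ[ℝ] ℝ × (S → ℝ) :=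
      { toFun := fun x => (a ⬝ᵥ x, fun k => x k.1)
        map_add' := by intro x y; simp [dotProduct_add]; rfl
        map_smul' := by intro c x; simp [dotProduct_smul]; rfl }
    have hkerL : LinearMap.ker M.mulVecLin = LinearMap.ker L := by
      ext x
      rw [LinearMap.mem_ker, LinearMap.mem_ker, Matrix.mulVecLin_apply, hker x]
      constructor
      · rintro ⟨h1, h2⟩
        have hz : (fun k : S => x k.1) = 0 := by
          funext k
          have hdk : d k.1 ≠ 0 := (Finset.mem_filter.mp k.2).2
          rcases mul_eq_zero.mp (h2 k.1) with h | h
          · exact absurd h hdk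
          · exact h
        simp only [L, LinearMap.coe_mk, AddHom.coe_mk]
        rw [Prod.mk_eq_zero]
        exact ⟨h1, hz⟩
      · intro h
        simp only [L, LinearMap.coe_mk, AddHom.coe_mk, Prod.mk_eq_zero] at h
        obtain ⟨h1, h2⟩ := h
        refine ⟨h1, fun k => ?_⟩
        by_cases hk : k ∈ S
        · have := congrFun h2 ⟨k, hk⟩
          simp only [Pi.zero_apply] at this
          rw [this, mul_zero]
        · have hdk : d k = 0 := by
            by_contra h
            exact hk (Finset.mem_filter.mpr ⟨Finset.mem_univ _, h⟩)
          rw [hdk, zero_mul]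
    -- L is surjective
    have hsurj : LinearMap.range L = ⊤ := by
      rw [LinearMap.range_eq_top]
      rintro ⟨c, y⟩
      let x₀ : Fin K → ℝ := fun k => if h : k ∈ S then y ⟨k, h⟩ else 0
      let x₁ : Fin K → ℝ := x₀ + ((c - a ⬝ᵥ x₀) / a k₀) • (Pi.single k₀ 1 : Fin K → ℝ)
      refine ⟨x₁, ?_⟩
      have hne : a k₀ ≠ 0 := ne_of_gt (ha k₀)
      have hdot : a ⬝ᵥ x₁ = c := by
        show a ⬝ᵥ (x₀ + ((c - a ⬝ᵥ x₀) / a k₀) • (Pi.single k₀ 1 : Fin K → ℝ)) = c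
        rw [dotProduct_add, dotProduct_smul, dotProduct_single, smul_eq_mul, mul_one]
        field_simp
        ring
      have hres : ∀ k : S, x₁ k.1 = y k := by
        rintro ⟨k, hk⟩
        have hkk₀ : k ≠ k₀ := fun h => hk₀ (h ▸ hk)
        simp [x₁, x₀, hk, Pi.single_eq_of_ne hkk₀]
      simp only [L, LinearMap.coe_mk, AddHom.coe_mk]
      exact Prod.ext hdot (funext hres)
    -- dimension count
    have hcardS : Fintype.card S = r := by
      rw [Fintype.card_coe, hr]
    have hfr : Module.finrank ℝ (ℝ × (S → ℝ)) = r + 1 := by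
      rw [Module.finrank_prod, Module.finrank_self, Module.finrank_pi, hcardS]
      omega
    have hL := LinearMap.finrank_range_add_finrank_ker L
    rw [hsurj, finrank_top, hfr, Module.finrank_pi] at hL
    have hkerdim : Module.finrank ℝ (LinearMap.ker L) = K - (r + 1) := by
      simp [Fintype.card_fin] at hL
      omega
    have hM' := LinearMap.finrank_range_add_finrank_ker M.mulVecLin
    rw [hkerL, hkerdim] at hM'
    simp [Fintype.card_fin, Module.finrank_pi] at hM'
    rw [Matrix.rank]
    omega
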